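/- Let x ∈ [1,∞)⁶ satisfy x₁ = max{x₁,...,x₆} and x₁ > 1. Then φ(x) ≤ max { φ(x₁, x₁, x₁, 1, x₁, x₁), φ(x₁, x₁, 1, 1, x₁, 1), φ(x₁, x₁, x₁, 1, x₁, 1) }. -/

import Mathlib

open Real

/-- The cosine of the dihedral angle at the edge `e₁` of a generalized hyper-ideal
tetrahedron whose edge lengths `lᵢ` satisfy `cosh lᵢ = xᵢ`. -/
noncomputable def phi (x1 x2 x3 x4 x5 x6 : ℝ) : ℝ :=
  (x2 * x3 + x5 * x6 + x1 * x2 * x5 + x1 * x3 * x6 - x1 ^ 2 * x4 + x4) /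
    (Real.sqrt (2 * x1 * x2 * x6 + x1 ^ 2 + x2 ^ 2 + x6 ^ 2 - 1) *
      Real.sqrt (2 * x1 * x3 * x5 + x1 ^ 2 + x3 ^ 2 + x5 ^ 2 - 1))



private lemma hasDerivAt_g (a b c d s : ℝ) (hQ : 0 < s ^ 2 + 2 * c * s + d) :
    HasDerivAt (fun t : ℝ => (a * t + b) / Real.sqrt (t ^ 2 + 2 * c * t + d))
      (((a * c - b) * s + (a * d - b * c)) /
        ((s ^ 2 + 2 * c * s + d) * Real.sqrt (s ^ 2 + 2 * c * s + d))) s := by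
  have hQ' : HasDerivAt (fun t : ℝ => t ^ 2 + 2 * c * t + d) (2 * s + 2 * c) s := by
    have h := ((hasDerivAt_pow 2 s).add ((hasDerivAt_id s).const_mul (2 * c))).add_const d
    exact h.congr_deriv (by push_cast; ring)
  have hne : Real.sqrt (s ^ 2 + 2 * c * s + d) ≠ 0 := (Real.sqrt_pos.mpr hQ).ne'
  have hnum : HasDerivAt (fun t : ℝ => a * t + b) a s := by
    simpa using ((hasDerivAt_id s).const_mul a).add_const b
  have key : ∀ u : ℝ, 0 < u → u ^ 2 = s ^ 2 + 2 * c * s + d →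
      ((a * c - b) * s + (a * d - b * c)) / ((s ^ 2 + 2 * c * s + d) * u) =
        (a * u - (a * s + b) * ((2 * s + 2 * c) / (2 * u))) / u ^ 2 := by
    intro u hu hu2
    have hd : d = u ^ 2 - s ^ 2 - 2 * c * s := by linarith
    subst hd
    have hu0 : u ≠ 0 := hu.ne'
    rw [show s ^ 2 + 2 * c * s + (u ^ 2 - s ^ 2 - 2 * c * s) = u ^ 2 by ring]
    field_simp
    ring
  have h := hnum.div (hQ'.sqrt hQ.ne') hne
  rw [key (Real.sqrt (s ^ 2 + 2 * c * s + d)) (Real.sqrt_pos.mpr hQ) (Real.sq_sqrt hQ.le)]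
  exact h

private lemma qc1 (a b c d p q t : ℝ) (ha : 0 < a) (hK : 0 < a * c - b)
    (hQ : ∀ s, p ≤ s → s ≤ q → 0 < s ^ 2 + 2 * c * s + d)
    (hpt : p ≤ t) (htq : t ≤ q) :
    (a * t + b) / Real.sqrt (t ^ 2 + 2 * c * t + d) ≤
      max ((a * p + b) / Real.sqrt (p ^ 2 + 2 * c * p + d))
        ((a * q + b) / Real.sqrt (q ^ 2 + 2 * c * q + d)) := by
  set g : ℝ → ℝ := fun t => (a * t + b) / Real.sqrt (t ^ 2 + 2 * c * t + d) with hg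
  rcases le_or_gt 0 ((a * c - b) * t + (a * d - b * c)) with hL | hL
  · -- monotone on [t, q]
    refine le_trans ?_ (le_max_right _ _)
    have hmono : MonotoneOn g (Set.Icc t q) := by
      refine monotoneOn_of_deriv_nonneg (convex_Icc t q) ?_ ?_ ?_
      · intro s hs
        exact (hasDerivAt_g a b c d s (hQ s (hpt.trans hs.1) hs.2)).continuousAt.continuousWithinAt
      · intro s hs
        rw [interior_Icc] at hs
        exact (hasDerivAt_g a b c d s
          (hQ s (hpt.trans hs.1.le) hs.2.le)).differentiableAt.differentiableWithinAt
      · intro s hs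
        rw [interior_Icc] at hs
        have hQs := hQ s (hpt.trans hs.1.le) hs.2.le
        rw [(hasDerivAt_g a b c d s hQs).deriv]
        have hLs : 0 ≤ (a * c - b) * s + (a * d - b * c) := by nlinarith [hs.1.le]
        positivity
    exact hmono (Set.left_mem_Icc.mpr htq) (Set.right_mem_Icc.mpr htq) htq
  · -- antitone on [p, t]
    refine le_trans ?_ (le_max_left _ _)
    have hanti : AntitoneOn g (Set.Icc p t) := by
      refine antitoneOn_of_deriv_nonpos (convex_Icc p t) ?_ ?_ ?_
      · intro s hs
        exact (hasDerivAt_g a b c d s (hQ s hs.1 (hs.2.trans htq))).continuousAt.continuousWithinAt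
      · intro s hs
        rw [interior_Icc] at hs
        exact (hasDerivAt_g a b c d s
          (hQ s hs.1.le (hs.2.le.trans htq))).differentiableAt.differentiableWithinAt
      · intro s hs
        rw [interior_Icc] at hs
        have hQs := hQ s hs.1.le (hs.2.le.trans htq)
        rw [(hasDerivAt_g a b c d s hQs).deriv]
        have hLs : (a * c - b) * s + (a * d - b * c) ≤ 0 := by nlinarith [hs.2.le]
        have hden : 0 < (s ^ 2 + 2 * c * s + d) * Real.sqrt (s ^ 2 + 2 * c * s + d) := by
          have := Real.sqrt_pos.mpr hQs
          positivity
        exact div_nonpos_of_nonpos_of_nonneg hLs hden.le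
    exact hanti (Set.left_mem_Icc.mpr hpt) (Set.right_mem_Icc.mpr hpt) hpt
private lemma max_div (u v w E : ℝ) (hE : 0 < E) (h : u ≤ max v w) :
    u / E ≤ max (v / E) (w / E) := by
  rcases le_total v w with hvw | hvw
  · rw [max_eq_right hvw] at h
    exact le_trans (by gcongr) (le_max_right _ _)
  · rw [max_eq_left hvw] at h
    exact le_trans (by gcongr) (le_max_left _ _)

private lemma step2 (x1 x3 x5 x6 t : ℝ) (h1 : 1 < x1) (h3 : 1 ≤ x3) (h5 : 1 ≤ x5)
    (h6 : 1 ≤ x6) (ht : 1 ≤ t) (htm : t ≤ x1) :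
    phi x1 t x3 1 x5 x6 ≤ max (phi x1 1 x3 1 x5 x6) (phi x1 x1 x3 1 x5 x6) := by
  have hB : 0 < 2 * x1 * x3 * x5 + x1 ^ 2 + x3 ^ 2 + x5 ^ 2 - 1 := by
    nlinarith [mul_pos (mul_pos (show (0:ℝ) < x1 by linarith) (show (0:ℝ) < x3 by linarith))
      (show (0:ℝ) < x5 by linarith)]
  have hE : 0 < Real.sqrt (2 * x1 * x3 * x5 + x1 ^ 2 + x3 ^ 2 + x5 ^ 2 - 1) :=
    Real.sqrt_pos.mpr hB
  have key : ∀ u : ℝ, phi x1 u x3 1 x5 x6 =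
      ((x3 + x1 * x5) * u + (x5 * x6 + x1 * x3 * x6 - x1 ^ 2 + 1)) /
        Real.sqrt (u ^ 2 + 2 * (x1 * x6) * u + (x1 ^ 2 + x6 ^ 2 - 1)) /
        Real.sqrt (2 * x1 * x3 * x5 + x1 ^ 2 + x3 ^ 2 + x5 ^ 2 - 1) := by
    intro u
    unfold phi
    rw [div_div]
    congr 1
    · ring
    · congr 1
      exact congrArg Real.sqrt (by ring)
  rw [key t, key 1, key x1]
  refine max_div _ _ _ _ hE (qc1 _ _ _ _ 1 x1 t (by nlinarith) ?_ ?_ ht htm)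
  · nlinarith [mul_pos (show (0:ℝ) < x5 * x6 + 1 by nlinarith)
      (show (0:ℝ) < x1 ^ 2 - 1 by nlinarith)]
  · intro s hs1 hs2
    nlinarith [mul_pos (mul_pos (show (0:ℝ) < x1 by linarith) (show (0:ℝ) < x6 by linarith))
      (show (0:ℝ) < s by linarith), sq_nonneg s, sq_nonneg x6]

private lemma step6 (x1 x2 x3 x5 t : ℝ) (h1 : 1 < x1) (h2 : 1 ≤ x2) (h3 : 1 ≤ x3)
    (h5 : 1 ≤ x5) (ht : 1 ≤ t) (htm : t ≤ x1) :
    phi x1 x2 x3 1 x5 t ≤ max (phi x1 x2 x3 1 x5 1) (phi x1 x2 x3 1 x5 x1) := by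
  have hB : 0 < 2 * x1 * x3 * x5 + x1 ^ 2 + x3 ^ 2 + x5 ^ 2 - 1 := by
    nlinarith [mul_pos (mul_pos (show (0:ℝ) < x1 by linarith) (show (0:ℝ) < x3 by linarith))
      (show (0:ℝ) < x5 by linarith)]
  have hE : 0 < Real.sqrt (2 * x1 * x3 * x5 + x1 ^ 2 + x3 ^ 2 + x5 ^ 2 - 1) :=
    Real.sqrt_pos.mpr hB
  have key : ∀ u : ℝ, phi x1 x2 x3 1 x5 u =
      ((x5 + x1 * x3) * u + (x2 * x3 + x1 * x2 * x5 - x1 ^ 2 + 1)) /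
        Real.sqrt (u ^ 2 + 2 * (x1 * x2) * u + (x1 ^ 2 + x2 ^ 2 - 1)) /
        Real.sqrt (2 * x1 * x3 * x5 + x1 ^ 2 + x3 ^ 2 + x5 ^ 2 - 1) := by
    intro u
    unfold phi
    rw [div_div]
    congr 1
    · ring
    · congr 1
      exact congrArg Real.sqrt (by ring)
  rw [key t, key 1, key x1]
  refine max_div _ _ _ _ hE (qc1 _ _ _ _ 1 x1 t (by nlinarith) ?_ ?_ ht htm)
  · nlinarith [mul_pos (show (0:ℝ) < x2 * x3 + 1 by nlinarith)
      (show (0:ℝ) < x1 ^ 2 - 1 by nlinarith)]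
  · intro s hs1 hs2
    nlinarith [mul_pos (mul_pos (show (0:ℝ) < x1 by linarith) (show (0:ℝ) < x2 by linarith))
      (show (0:ℝ) < s by linarith), sq_nonneg s, sq_nonneg x2]

private lemma step3 (x1 x2 x5 x6 t : ℝ) (h1 : 1 < x1) (h2 : 1 ≤ x2) (h5 : 1 ≤ x5)
    (h6 : 1 ≤ x6) (ht : 1 ≤ t) (htm : t ≤ x1) :
    phi x1 x2 t 1 x5 x6 ≤ max (phi x1 x2 1 1 x5 x6) (phi x1 x2 x1 1 x5 x6) := by
  have hA : 0 < 2 * x1 * x2 * x6 + x1 ^ 2 + x2 ^ 2 + x6 ^ 2 - 1 := by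
    nlinarith [mul_pos (mul_pos (show (0:ℝ) < x1 by linarith) (show (0:ℝ) < x2 by linarith))
      (show (0:ℝ) < x6 by linarith)]
  have hE : 0 < Real.sqrt (2 * x1 * x2 * x6 + x1 ^ 2 + x2 ^ 2 + x6 ^ 2 - 1) :=
    Real.sqrt_pos.mpr hA
  have key : ∀ u : ℝ, phi x1 x2 u 1 x5 x6 =
      ((x2 + x1 * x6) * u + (x5 * x6 + x1 * x2 * x5 - x1 ^ 2 + 1)) /
        Real.sqrt (u ^ 2 + 2 * (x1 * x5) * u + (x1 ^ 2 + x5 ^ 2 - 1)) /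
        Real.sqrt (2 * x1 * x2 * x6 + x1 ^ 2 + x2 ^ 2 + x6 ^ 2 - 1) := by
    intro u
    unfold phi
    rw [div_div]
    have hb : Real.sqrt (2 * x1 * u * x5 + x1 ^ 2 + u ^ 2 + x5 ^ 2 - 1) =
        Real.sqrt (u ^ 2 + 2 * (x1 * x5) * u + (x1 ^ 2 + x5 ^ 2 - 1)) :=
      congrArg Real.sqrt (by ring)
    rw [hb]
    congr 1
    · ring
    · exact mul_comm _ _
  rw [key t, key 1, key x1]
  refine max_div _ _ _ _ hE (qc1 _ _ _ _ 1 x1 t (by nlinarith) ?_ ?_ ht htm)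
  · nlinarith [mul_pos (show (0:ℝ) < x5 * x6 + 1 by nlinarith)
      (show (0:ℝ) < x1 ^ 2 - 1 by nlinarith)]
  · intro s hs1 hs2
    nlinarith [mul_pos (mul_pos (show (0:ℝ) < x1 by linarith) (show (0:ℝ) < x5 by linarith))
      (show (0:ℝ) < s by linarith), sq_nonneg s, sq_nonneg x5]

private lemma step5 (x1 x2 x3 x6 t : ℝ) (h1 : 1 < x1) (h2 : 1 ≤ x2) (h3 : 1 ≤ x3)
    (h6 : 1 ≤ x6) (ht : 1 ≤ t) (htm : t ≤ x1) :
    phi x1 x2 x3 1 t x6 ≤ max (phi x1 x2 x3 1 1 x6) (phi x1 x2 x3 1 x1 x6) := by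
  have hA : 0 < 2 * x1 * x2 * x6 + x1 ^ 2 + x2 ^ 2 + x6 ^ 2 - 1 := by
    nlinarith [mul_pos (mul_pos (show (0:ℝ) < x1 by linarith) (show (0:ℝ) < x2 by linarith))
      (show (0:ℝ) < x6 by linarith)]
  have hE : 0 < Real.sqrt (2 * x1 * x2 * x6 + x1 ^ 2 + x2 ^ 2 + x6 ^ 2 - 1) :=
    Real.sqrt_pos.mpr hA
  have key : ∀ u : ℝ, phi x1 x2 x3 1 u x6 =
      ((x6 + x1 * x2) * u + (x2 * x3 + x1 * x3 * x6 - x1 ^ 2 + 1)) /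
        Real.sqrt (u ^ 2 + 2 * (x1 * x3) * u + (x1 ^ 2 + x3 ^ 2 - 1)) /
        Real.sqrt (2 * x1 * x2 * x6 + x1 ^ 2 + x2 ^ 2 + x6 ^ 2 - 1) := by
    intro u
    unfold phi
    rw [div_div]
    have hb : Real.sqrt (2 * x1 * x3 * u + x1 ^ 2 + x3 ^ 2 + u ^ 2 - 1) =
        Real.sqrt (u ^ 2 + 2 * (x1 * x3) * u + (x1 ^ 2 + x3 ^ 2 - 1)) :=
      congrArg Real.sqrt (by ring)
    rw [hb]
    congr 1
    · ring
    · exact mul_comm _ _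
  rw [key t, key 1, key x1]
  refine max_div _ _ _ _ hE (qc1 _ _ _ _ 1 x1 t (by nlinarith) ?_ ?_ ht htm)
  · nlinarith [mul_pos (show (0:ℝ) < x2 * x3 + 1 by nlinarith)
      (show (0:ℝ) < x1 ^ 2 - 1 by nlinarith)]
  · intro s hs1 hs2
    nlinarith [mul_pos (mul_pos (show (0:ℝ) < x1 by linarith) (show (0:ℝ) < x3 by linarith))
      (show (0:ℝ) < s by linarith), sq_nonneg s, sq_nonneg x3]

private lemma step4 (x1 x2 x3 x4 x5 x6 : ℝ) (h1 : 1 ≤ x1) (h2 : 1 ≤ x2) (h3 : 1 ≤ x3)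
    (h4 : 1 ≤ x4) (h5 : 1 ≤ x5) (h6 : 1 ≤ x6) :
    phi x1 x2 x3 x4 x5 x6 ≤ phi x1 x2 x3 1 x5 x6 := by
  have hA : 0 < 2 * x1 * x2 * x6 + x1 ^ 2 + x2 ^ 2 + x6 ^ 2 - 1 := by
    nlinarith [mul_pos (mul_pos (show (0:ℝ) < x1 by linarith) (show (0:ℝ) < x2 by linarith))
      (show (0:ℝ) < x6 by linarith)]
  have hB : 0 < 2 * x1 * x3 * x5 + x1 ^ 2 + x3 ^ 2 + x5 ^ 2 - 1 := by
    nlinarith [mul_pos (mul_pos (show (0:ℝ) < x1 by linarith) (show (0:ℝ) < x3 by linarith))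
      (show (0:ℝ) < x5 by linarith)]
  have hD : 0 < Real.sqrt (2 * x1 * x2 * x6 + x1 ^ 2 + x2 ^ 2 + x6 ^ 2 - 1) *
      Real.sqrt (2 * x1 * x3 * x5 + x1 ^ 2 + x3 ^ 2 + x5 ^ 2 - 1) :=
    mul_pos (Real.sqrt_pos.mpr hA) (Real.sqrt_pos.mpr hB)
  unfold phi
  rw [div_le_div_iff_of_pos_right hD]
  nlinarith [mul_nonneg (show (0:ℝ) ≤ x1 ^ 2 - 1 by nlinarith)
    (show (0:ℝ) ≤ x4 - 1 by linarith)]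

private lemma sqrtIneq (x1 : ℝ) (h1 : 1 < x1) :
    4 * x1 ^ 2 ≤ (x1 ^ 3 - x1 ^ 2 + 3 * x1 + 1) * Real.sqrt (2 * x1 - 1) := by
  have h2 : (0:ℝ) < 2 * x1 - 1 := by linarith
  have hP : (0:ℝ) < x1 ^ 3 - x1 ^ 2 + 3 * x1 + 1 := by nlinarith
  have key : Real.sqrt (16 * x1 ^ 4) ≤
      Real.sqrt ((x1 ^ 3 - x1 ^ 2 + 3 * x1 + 1) ^ 2 * (2 * x1 - 1)) := by
    apply Real.sqrt_le_sqrt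
    nlinarith [mul_nonneg (pow_nonneg (show (0:ℝ) ≤ x1 - 1 by linarith) 3)
      (show (0:ℝ) ≤ 2 * x1 ^ 4 + x1 ^ 3 + 13 * x1 ^ 2 + 7 * x1 + 1 by positivity)]
  rwa [show (16 * x1 ^ 4 : ℝ) = (4 * x1 ^ 2) ^ 2 by ring, Real.sqrt_sq (by positivity),
    Real.sqrt_mul (by positivity) _, Real.sqrt_sq hP.le] at key

private lemma corner (x1 e2 e3 e5 e6 : ℝ) (h1 : 1 < x1)
    (he2 : e2 = 1 ∨ x1 = e2) (he3 : e3 = 1 ∨ x1 = e3)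
    (he5 : e5 = 1 ∨ x1 = e5) (he6 : e6 = 1 ∨ x1 = e6) :
    phi x1 e2 e3 1 e5 e6 ≤
      max (phi x1 x1 x1 1 x1 x1) (max (phi x1 x1 1 1 x1 1) (phi x1 x1 x1 1 x1 1)) := by
  have hx : (0:ℝ) < x1 := by linarith
  have hx2 : (0:ℝ) < 2 * x1 := by linarith
  have hx1 : (0:ℝ) < x1 + 1 := by linarith
  have hs0 : 0 < Real.sqrt (2 * x1 - 1) := Real.sqrt_pos.mpr (by linarith)
  have E11 : Real.sqrt (2 * x1 * 1 * 1 + x1 ^ 2 + 1 ^ 2 + 1 ^ 2 - 1) = x1 + 1 := by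
    rw [show (2 * x1 * 1 * 1 + x1 ^ 2 + 1 ^ 2 + 1 ^ 2 - 1 : ℝ) = (x1 + 1) ^ 2 by ring]
    exact Real.sqrt_sq (by linarith)
  have Ex1 : Real.sqrt (2 * x1 * x1 * 1 + x1 ^ 2 + x1 ^ 2 + 1 ^ 2 - 1) = 2 * x1 := by
    rw [show (2 * x1 * x1 * 1 + x1 ^ 2 + x1 ^ 2 + 1 ^ 2 - 1 : ℝ) = (2 * x1) ^ 2 by ring]
    exact Real.sqrt_sq (by linarith)
  have E1x : Real.sqrt (2 * x1 * 1 * x1 + x1 ^ 2 + 1 ^ 2 + x1 ^ 2 - 1) = 2 * x1 := by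
    rw [show (2 * x1 * 1 * x1 + x1 ^ 2 + 1 ^ 2 + x1 ^ 2 - 1 : ℝ) = (2 * x1) ^ 2 by ring]
    exact Real.sqrt_sq (by linarith)
  have Exx : Real.sqrt (2 * x1 * x1 * x1 + x1 ^ 2 + x1 ^ 2 + x1 ^ 2 - 1) =
      (x1 + 1) * Real.sqrt (2 * x1 - 1) := by
    rw [show (2 * x1 * x1 * x1 + x1 ^ 2 + x1 ^ 2 + x1 ^ 2 - 1 : ℝ) =
      (x1 + 1) ^ 2 * (2 * x1 - 1) by ring, Real.sqrt_mul (by positivity) _,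
      Real.sqrt_sq (by linarith)]
  have hss : Real.sqrt (2 * x1 - 1) * Real.sqrt (2 * x1 - 1) = 2 * x1 - 1 :=
    Real.mul_self_sqrt (by linarith)
  have hphi1 : phi x1 x1 x1 1 x1 x1 =
      (2 * x1 ^ 3 + x1 ^ 2 + 1) / ((x1 + 1) ^ 2 * (2 * x1 - 1)) := by
    unfold phi
    rw [Exx]
    rw [show (x1 + 1) * Real.sqrt (2 * x1 - 1) * ((x1 + 1) * Real.sqrt (2 * x1 - 1)) =
      (x1 + 1) ^ 2 * (2 * x1 - 1) from by linear_combination (x1 + 1) ^ 2 * hss]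
    congr 1
    ring
  rcases he2 with rfl | rfl <;> rcases he3 with rfl | rfl <;>
    rcases he5 with rfl | rfl <;> rcases he6 with rfl | rfl
  · -- (1,1,1,1) vs phi1
    refine le_trans ?_ (le_max_left _ _)
    rw [hphi1]; unfold phi; simp only [E11]
    rw [div_le_div_iff₀ (mul_pos hx1 hx1) (mul_pos (pow_pos hx1 2) (by linarith))]
    nlinarith [mul_nonneg (show (0:ℝ) ≤ 4 * (x1 + 1) ^ 3 by positivity) (sq_nonneg (x1 - 1))]
  · -- (1,1,1,x) one-x vs phi2
    refine le_trans ?_ ((le_max_left _ _).trans (le_max_right _ _))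
    unfold phi; simp only [E11, Ex1, E1x]
    rw [div_le_div_iff₀ (mul_pos hx2 hx1) (mul_pos hx2 hx2)]
    nlinarith [mul_nonneg (mul_nonneg hx2.le (sq_nonneg (x1 + 1))) (sq_nonneg (x1 - 1))]
  · -- (1,1,x,1) one-x vs phi2
    refine le_trans ?_ ((le_max_left _ _).trans (le_max_right _ _))
    unfold phi; simp only [E11, Ex1, E1x]
    rw [div_le_div_iff₀ (mul_pos hx1 hx2) (mul_pos hx2 hx2)]
    nlinarith [mul_nonneg (mul_nonneg hx2.le (sq_nonneg (x1 + 1))) (sq_nonneg (x1 - 1))]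
  · -- (1,1,x,x) two-x vs phi2
    refine le_trans ?_ ((le_max_left _ _).trans (le_max_right _ _))
    unfold phi; simp only [E11, Ex1, E1x]
    rw [div_le_div_iff₀ (mul_pos hx2 hx2) (mul_pos hx2 hx2)]
    nlinarith [mul_nonneg (show (0:ℝ) ≤ 4 * x1 ^ 2 by positivity)
      (pow_nonneg (show (0:ℝ) ≤ x1 - 1 by linarith) 3)]
  · -- (1,x,1,1) one-x vs phi2
    refine le_trans ?_ ((le_max_left _ _).trans (le_max_right _ _))
    unfold phi; simp only [E11, Ex1, E1x]
    rw [div_le_div_iff₀ (mul_pos hx1 hx2) (mul_pos hx2 hx2)]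
    nlinarith [mul_nonneg (mul_nonneg hx2.le (sq_nonneg (x1 + 1))) (sq_nonneg (x1 - 1))]
  · -- (1,x,1,x) vs phi2, equal
    refine le_trans ?_ ((le_max_left _ _).trans (le_max_right _ _))
    unfold phi; simp only [E11, Ex1, E1x]
    rw [div_le_div_iff₀ (mul_pos hx2 hx2) (mul_pos hx2 hx2)]
    exact le_of_eq (by ring)
  · -- (1,x,x,1) 1/s vs phi2
    refine le_trans ?_ ((le_max_left _ _).trans (le_max_right _ _))
    unfold phi; simp only [E11, Ex1, E1x, Exx]
    rw [div_le_div_iff₀ (mul_pos hx1 (mul_pos hx1 hs0)) (mul_pos hx2 hx2)]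
    nlinarith [mul_nonneg (sq_nonneg (x1 + 1)) (sub_nonneg.mpr (sqrtIneq x1 h1))]
  · -- (1,x,x,x) three-x vs phi3, equal
    refine le_trans ?_ ((le_max_right _ _).trans (le_max_right _ _))
    unfold phi; simp only [E11, Ex1, E1x, Exx]
    rw [div_le_div_iff₀ (mul_pos hx2 (mul_pos hx1 hs0)) (mul_pos hx2 (mul_pos hx1 hs0))]
    exact le_of_eq (by ring)
  · -- (x,1,1,1) one-x vs phi2
    refine le_trans ?_ ((le_max_left _ _).trans (le_max_right _ _))
    unfold phi; simp only [E11, Ex1, E1x]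
    rw [div_le_div_iff₀ (mul_pos hx2 hx1) (mul_pos hx2 hx2)]
    nlinarith [mul_nonneg (mul_nonneg hx2.le (sq_nonneg (x1 + 1))) (sq_nonneg (x1 - 1))]
  · -- (x,1,1,x) 1/s vs phi2
    refine le_trans ?_ ((le_max_left _ _).trans (le_max_right _ _))
    unfold phi; simp only [E11, Ex1, E1x, Exx]
    rw [div_le_div_iff₀ (mul_pos (mul_pos hx1 hs0) hx1) (mul_pos hx2 hx2)]
    nlinarith [mul_nonneg (sq_nonneg (x1 + 1)) (sub_nonneg.mpr (sqrtIneq x1 h1))]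
  · -- (x,1,x,1) is phi2
    exact (le_max_left _ _).trans (le_max_right _ _)
  · -- (x,1,x,x) three-x vs phi3, equal
    refine le_trans ?_ ((le_max_right _ _).trans (le_max_right _ _))
    unfold phi; simp only [E11, Ex1, E1x, Exx]
    rw [div_le_div_iff₀ (mul_pos (mul_pos hx1 hs0) hx2) (mul_pos hx2 (mul_pos hx1 hs0))]
    exact le_of_eq (by ring)
  · -- (x,x,1,1) two-x vs phi2
    refine le_trans ?_ ((le_max_left _ _).trans (le_max_right _ _))
    unfold phi; simp only [E11, Ex1, E1x]
    rw [div_le_div_iff₀ (mul_pos hx2 hx2) (mul_pos hx2 hx2)]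
    nlinarith [mul_nonneg (show (0:ℝ) ≤ 4 * x1 ^ 2 by positivity)
      (pow_nonneg (show (0:ℝ) ≤ x1 - 1 by linarith) 3)]
  · -- (x,x,1,x) three-x vs phi3, equal
    refine le_trans ?_ ((le_max_right _ _).trans (le_max_right _ _))
    unfold phi; simp only [E11, Ex1, E1x, Exx]
    rw [div_le_div_iff₀ (mul_pos (mul_pos hx1 hs0) hx2) (mul_pos hx2 (mul_pos hx1 hs0))]
    exact le_of_eq (by ring)
  · -- (x,x,x,1) is phi3
    exact (le_max_right _ _).trans (le_max_right _ _)
  · -- (x,x,x,x) is phi1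
    exact le_max_left _ _

theorem phi_longest_edge_bound (x1 x2 x3 x4 x5 x6 : ℝ)
    (h1 : 1 ≤ x1) (h2 : 1 ≤ x2) (h3 : 1 ≤ x3) (h4 : 1 ≤ x4) (h5 : 1 ≤ x5) (h6 : 1 ≤ x6)
    (h2m : x2 ≤ x1) (h3m : x3 ≤ x1) (h4m : x4 ≤ x1) (h5m : x5 ≤ x1) (h6m : x6 ≤ x1)
    (h1' : 1 < x1) :
    phi x1 x2 x3 x4 x5 x6 ≤
      max (phi x1 x1 x1 1 x1 x1) (max (phi x1 x1 1 1 x1 1) (phi x1 x1 x1 1 x1 1)) := by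
  have hone : ∀ e : ℝ, (e = 1 ∨ x1 = e) → 1 ≤ e := by
    rintro e (rfl | rfl) <;> linarith
  have H5 : ∀ e2 e3 t e6 : ℝ, (e2 = 1 ∨ x1 = e2) → (e3 = 1 ∨ x1 = e3) →
      1 ≤ t → t ≤ x1 → (e6 = 1 ∨ x1 = e6) →
      phi x1 e2 e3 1 t e6 ≤
        max (phi x1 x1 x1 1 x1 x1) (max (phi x1 x1 1 1 x1 1) (phi x1 x1 x1 1 x1 1)) := by
    intro e2 e3 t e6 he2 he3 ht htm he6
    refine (step5 x1 e2 e3 e6 t h1' (hone _ he2) (hone _ he3) (hone _ he6) ht htm).trans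
      (max_le ?_ ?_)
    · exact corner x1 e2 e3 1 e6 h1' he2 he3 (Or.inl rfl) he6
    · exact corner x1 e2 e3 x1 e6 h1' he2 he3 (Or.inr rfl) he6
  have H3 : ∀ e2 s t e6 : ℝ, (e2 = 1 ∨ x1 = e2) → 1 ≤ s → s ≤ x1 →
      1 ≤ t → t ≤ x1 → (e6 = 1 ∨ x1 = e6) →
      phi x1 e2 s 1 t e6 ≤
        max (phi x1 x1 x1 1 x1 x1) (max (phi x1 x1 1 1 x1 1) (phi x1 x1 x1 1 x1 1)) := by
    intro e2 s t e6 he2 hs hsm ht htm he6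
    refine (step3 x1 e2 t e6 s h1' (hone _ he2) ht (hone _ he6) hs hsm).trans
      (max_le ?_ ?_)
    · exact H5 e2 1 t e6 he2 (Or.inl rfl) ht htm he6
    · exact H5 e2 x1 t e6 he2 (Or.inr rfl) ht htm he6
  have H6 : ∀ e2 s t u : ℝ, (e2 = 1 ∨ x1 = e2) → 1 ≤ s → s ≤ x1 →
      1 ≤ t → t ≤ x1 → 1 ≤ u → u ≤ x1 →
      phi x1 e2 s 1 t u ≤
        max (phi x1 x1 x1 1 x1 x1) (max (phi x1 x1 1 1 x1 1) (phi x1 x1 x1 1 x1 1)) := by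
    intro e2 s t u he2 hs hsm ht htm hu hum
    refine (step6 x1 e2 s t u h1' (hone _ he2) hs ht hu hum).trans (max_le ?_ ?_)
    · exact H3 e2 s t 1 he2 hs hsm ht htm (Or.inl rfl)
    · exact H3 e2 s t x1 he2 hs hsm ht htm (Or.inr rfl)
  have H2 : phi x1 x2 x3 1 x5 x6 ≤
      max (phi x1 x1 x1 1 x1 x1) (max (phi x1 x1 1 1 x1 1) (phi x1 x1 x1 1 x1 1)) := by
    refine (step2 x1 x3 x5 x6 x2 h1' h3 h5 h6 h2 h2m).trans (max_le ?_ ?_)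
    · exact H6 1 x3 x5 x6 (Or.inl rfl) h3 h3m h5 h5m h6 h6m
    · exact H6 x1 x3 x5 x6 (Or.inr rfl) h3 h3m h5 h5m h6 h6m
  exact (step4 x1 x2 x3 x4 x5 x6 h1 h2 h3 h4 h5 h6).trans H2
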